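/- For every order-preserving bijection α : [−∞,0] → [−∞,+∞] there exist a finite ultrametric space X and an element M ∈ I_ω(I_ω(X)) such that g^α_X(ζ_X(M)) ≠ ξ_X(J_ω(g^α_X)(g^α_{I_ω(X)}(M))). Concretely, one may take X = {a,b,c} with all pairwise distances equal to 1 and M = ((−1) ⊙ δ_μ) ∨ (0 ⊙ δ_ν), where μ = ((−2) ⊙ δ_a) ∨ (0 ⊙ δ_b) and ν = ((−3) ⊙ δ_b) ∨ (0 ⊙ δ_c). Consequently, no isomorphism of the functors I_ω and J_ω is compatible with the monad multiplications ζ and ξ, so the monads (I_ω, δ, ζ) and (J_ω, δ, ξ) are not isomorphic. -/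
import Mathlib


open scoped ENNReal

noncomputable section

/-- A metric is an *ultrametric* if the strong triangle inequality holds. -/
def IsUltra (X : Type*) [MetricSpace X] : Prop :=
  ∀ x y z : X, dist x y ≤ max (dist x z) (dist z y)

/-- `mmOf x α` is the max-min functional `∨ᵢ αᵢ ∧ δ_{x i}`,
`φ ↦ maxᵢ min (α i) (φ (x i))` (computed in the extended reals). -/
def mmOf {A : Type*} {n : ℕ} (x : Fin (n + 1) → A) (α : Fin (n + 1) → EReal) :
    (A → ℝ) → ℝ :=
  fun φ => (⨆ i, min (α i) ((φ (x i) : EReal))).toReal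

/-- `μ` is a max-min measure of finite support, with support contained in `S`. -/
def IsMMOn {A : Type*} (S : Set A) (μ : (A → ℝ) → ℝ) : Prop :=
  ∃ (n : ℕ) (x : Fin (n + 1) → A) (α : Fin (n + 1) → EReal),
    (∀ i, x i ∈ S) ∧ (∃ i, α i = ⊤) ∧ μ = mmOf x α

/-- `μ` is a max-min measure of finite support. -/
def IsMM {A : Type*} (μ : (A → ℝ) → ℝ) : Prop :=
  IsMMOn Set.univ μ

/-- `idemOf x α` is the idempotent measure `∨ᵢ αᵢ ⊙ δ_{x i}`,
`φ ↦ maxᵢ (α i + φ (x i))` (computed in the extended reals). -/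
def idemOf {A : Type*} {n : ℕ} (x : Fin (n + 1) → A) (α : Fin (n + 1) → EReal) :
    (A → ℝ) → ℝ :=
  fun φ => (⨆ i, (α i + (φ (x i) : EReal))).toReal

/-- `μ` is an idempotent measure of finite support, with support contained in `S`. -/
def IsIdemOn {A : Type*} (S : Set A) (μ : (A → ℝ) → ℝ) : Prop :=
  ∃ (n : ℕ) (x : Fin (n + 1) → A) (α : Fin (n + 1) → EReal),
    (∀ i, x i ∈ S) ∧ (∀ i, α i ≤ 0) ∧ (∃ i, α i = 0) ∧ μ = idemOf x α

/-- `μ` is an idempotent measure of finite support. -/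
def IsIdem {A : Type*} (μ : (A → ℝ) → ℝ) : Prop :=
  IsIdemOn Set.univ μ

/-- The Dirac measure `δ_a`. -/
def dirac {A : Type*} (a : A) : (A → ℝ) → ℝ := fun φ => φ a

/-- `FrE e r φ`: the function `φ` is constant on every open `r`-ball of the
(extended-valued) distance `e`; this is the family `𝓕_r`. -/
def FrE {A : Type*} (e : A → A → ℝ≥0∞) (r : ℝ≥0∞) (φ : A → ℝ) : Prop :=
  ∀ x y : A, e x y < r → φ x = φ y

/-- The ultrametric `d̂` on functionals:
`d̂(μ,ν) = inf {r > 0 ∣ μ φ = ν φ for every φ ∈ 𝓕_r}`. -/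
def dHatE {A : Type*} (e : A → A → ℝ≥0∞) (μ ν : (A → ℝ) → ℝ) : ℝ≥0∞ :=
  sInf {r : ℝ≥0∞ | 0 < r ∧ ∀ φ : A → ℝ, FrE e r φ → μ φ = ν φ}

/-- The pushforward `J_ω(f)` of functionals along `f`. -/
def Jmap {A B : Type*} (f : A → B) (μ : (A → ℝ) → ℝ) : (B → ℝ) → ℝ :=
  fun φ => μ (φ ∘ f)

/-- The extended distance of a metric space, as a two-variable function. -/
def eD (X : Type*) [PseudoEMetricSpace X] : X → X → ℝ≥0∞ :=
  fun x y => edist x y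

/-- The monad multiplication (`ξ` for max-min measures, `ζ` for idempotent
measures): `mult M φ = M (μ ↦ μ φ)`. -/
def mult {A : Type*} (M : (((A → ℝ) → ℝ) → ℝ) → ℝ) : (A → ℝ) → ℝ :=
  fun φ => M fun μ => μ φ



private lemma esup2 (f : Fin 2 → EReal) : (⨆ i, f i) = f 0 ⊔ f 1 := by
  apply le_antisymm
  · exact iSup_le fun i => by fin_cases i <;> simp
  · exact sup_le (le_iSup f 0) (le_iSup f 1)

private lemma esup4 (f : Fin 4 → EReal) : (⨆ i, f i) = ((f 0 ⊔ f 1) ⊔ f 2) ⊔ f 3 := by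
  apply le_antisymm
  · exact iSup_le fun i => by fin_cases i <;> simp
  · exact sup_le (sup_le (sup_le (le_iSup f 0) (le_iSup f 1)) (le_iSup f 2)) (le_iSup f 3)

private lemma e1 : ((-1:EReal)) = ((-1:ℝ):EReal) := by
  rw [show ((-1:ℝ)) = -(1:ℝ) by norm_num, EReal.coe_neg]; congr 1
private lemma e2 : ((-2:EReal)) = ((-2:ℝ):EReal) := by
  rw [show ((-2:ℝ)) = -(2:ℝ) by norm_num, EReal.coe_neg]; congr 1
private lemma e3 : ((-3:EReal)) = ((-3:ℝ):EReal) := by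
  rw [show ((-3:ℝ)) = -(3:ℝ) by norm_num, EReal.coe_neg]; congr 1

private lemma ecoe_sup (x y : ℝ) : ((x ⊔ y : ℝ) : EReal) = (x : EReal) ⊔ y :=
  Monotone.map_sup (fun _ _ => EReal.coe_le_coe_iff.mpr) x y

private lemma eneg3le : ((-3:EReal)) ≤ 0 := by
  rw [e3, show ((0:EReal)) = ((0:ℝ):EReal) from rfl]
  exact EReal.coe_le_coe_iff.mpr (by norm_num)
private lemma eneg2le : ((-2:EReal)) ≤ 0 := by
  rw [e2, show ((0:EReal)) = ((0:ℝ):EReal) from rfl]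
  exact EReal.coe_le_coe_iff.mpr (by norm_num)
private lemma eneg1le : ((-1:EReal)) ≤ 0 := by
  rw [e1, show ((0:EReal)) = ((0:ℝ):EReal) from rfl]
  exact EReal.coe_le_coe_iff.mpr (by norm_num)
private lemma e32 : ((-3:EReal)) < -2 := by
  rw [e3, e2]; exact EReal.coe_lt_coe_iff.mpr (by norm_num)
private lemma e21 : ((-2:EReal)) < -1 := by
  rw [e2, e1]; exact EReal.coe_lt_coe_iff.mpr (by norm_num)
private lemma e10 : ((-1:EReal)) < 0 := by
  rw [e1, show ((0:EReal)) = ((0:ℝ):EReal) from rfl]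
  exact EReal.coe_lt_coe_iff.mpr (by norm_num)


private lemma idem_pair {A : Type*} (p q : A) (c : ℝ) (φ : A → ℝ) :
    idemOf ![p, q] ![((c : ℝ) : EReal), 0] φ = max (c + φ p) (φ q) := by
  unfold idemOf
  rw [esup2]
  simp only [Matrix.cons_val_zero, Matrix.cons_val_one, Matrix.head_cons]
  rw [zero_add, ← EReal.coe_add, ← ecoe_sup, EReal.toReal_coe]

private lemma idem_quad {A : Type*} (p q r' s' : A) (c1 c2 c3 : ℝ) (φ : A → ℝ) :
    idemOf ![p, q, r', s'] ![((c1 : ℝ) : EReal), ((c2 : ℝ) : EReal), ((c3 : ℝ) : EReal), 0] φ =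
      max (max (max (c1 + φ p) (c2 + φ q)) (c3 + φ r')) (φ s') := by
  unfold idemOf
  rw [esup4]
  simp only [Matrix.cons_val_zero, Matrix.cons_val_one, Matrix.head_cons,
    Matrix.cons_val_two, Matrix.cons_val_three, Matrix.tail_cons]
  rw [zero_add, ← EReal.coe_add, ← EReal.coe_add, ← EReal.coe_add,
    ← ecoe_sup, ← ecoe_sup, ← ecoe_sup, EReal.toReal_coe]

/-- The monads `(I_ω, δ, ζ)` and `(J_ω, δ, ξ)` are not
isomorphic: for every order-preserving bijection `a : [-∞,0] → [-∞,+∞]`,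
taking an ultrametric space `X` containing three points `pa, pb, pc` with all
pairwise distances `1`, and
`M = ((-1) ⊙ δ_μ) ∨ δ_ν ∈ I_ω(I_ω(X))` with `μ = ((-2) ⊙ δ_{pa}) ∨ δ_{pb}`,
`ν = ((-3) ⊙ δ_{pb}) ∨ δ_{pc}`, one has
`g^a_X(ζ_X(M)) ≠ ξ_X(J_ω(g^a_X)(g^a_{I_ω(X)}(M)))`; hence no isomorphism of
the functors `I_ω` and `J_ω` is compatible with the multiplications `ζ`, `ξ`. -/
theorem monads_not_isomorphic {X : Type*} [MetricSpace X] (hX : IsUltra X)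
    (pa pb pc : X)
    (hab : dist pa pb = 1) (hac : dist pa pc = 1) (hbc : dist pb pc = 1)
    (a : EReal → EReal) (hmono : MonotoneOn a {t : EReal | t ≤ 0})
    (habij : Set.BijOn a {t : EReal | t ≤ 0} Set.univ)
    (g1 : ((X → ℝ) → ℝ) → ((X → ℝ) → ℝ))
    (g2 : ((((X → ℝ) → ℝ) → ℝ) → ℝ) → ((((X → ℝ) → ℝ) → ℝ) → ℝ))
    (hg1 : ∀ (n : ℕ) (x : Fin (n + 1) → X) (α : Fin (n + 1) → EReal),
        (∀ i, α i ≤ 0) → (∃ i, α i = 0) →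
        g1 (idemOf x α) = mmOf x (fun i => a (α i)))
    (hg2 : ∀ (n : ℕ) (x : Fin (n + 1) → ((X → ℝ) → ℝ))
        (α : Fin (n + 1) → EReal),
        (∀ i, α i ≤ 0) → (∃ i, α i = 0) →
        g2 (idemOf x α) = mmOf x (fun i => a (α i))) :
    g1 (mult (idemOf
        ![idemOf ![pa, pb] ![(-2 : EReal), 0], idemOf ![pb, pc] ![(-3 : EReal), 0]]
        ![(-1 : EReal), 0])) ≠
      mult (Jmap g1 (g2 (idemOf
        ![idemOf ![pa, pb] ![(-2 : EReal), 0], idemOf ![pb, pc] ![(-3 : EReal), 0]]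
        ![(-1 : EReal), 0]))) := by
  classical
  -- basic facts about the bijection `a`
  have hstrict : ∀ u v : EReal, u ≤ 0 → v ≤ 0 → u < v → a u < a v := by
    intro u v hu hv huv
    rcases lt_or_eq_of_le (hmono hu hv huv.le) with h | h
    · exact h
    · exact absurd (habij.injOn hu hv h) huv.ne
  have a0top : a 0 = ⊤ := by
    obtain ⟨t, ht, hat⟩ := habij.surjOn (Set.mem_univ (⊤ : EReal))
    have h0mem : (0 : EReal) ∈ {t : EReal | t ≤ 0} := Set.mem_setOf.mpr le_rfl
    have h2 : a t ≤ a 0 := hmono ht h0mem ht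
    rw [hat] at h2
    exact top_le_iff.mp h2
  have h32 : a (-3) < a (-2) := hstrict _ _ eneg3le eneg2le e32
  have h21 : a (-2) < a (-1) := hstrict _ _ eneg2le eneg1le e21
  have h10 : a (-1) < ⊤ := by rw [← a0top]; exact hstrict _ _ eneg1le le_rfl e10
  have h2nb : a (-2) ≠ ⊥ := (bot_le.trans_lt h32).ne'
  have h2nt : a (-2) ≠ ⊤ := (h21.trans h10).ne
  set A2 : ℝ := (a (-2)).toReal with hA2def
  have hA2 : ((A2 : ℝ) : EReal) = a (-2) := EReal.coe_toReal h2nt h2nb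
  set A3 : ℝ := (a (-3)).toReal with hA3def
  set r : ℝ := A2 + 1 with hrdef
  set s : ℝ := min A3 A2 - 1 with hsdef
  have hsA2 : s < A2 := by
    have := min_le_right A3 A2
    rw [hsdef]; linarith
  have hr2 : a (-2) < (r : EReal) := by
    rw [← hA2]
    exact EReal.coe_lt_coe_iff.mpr (by rw [hrdef]; linarith)
  have hr3 : a (-3) < (r : EReal) := h32.trans hr2
  have hs2 : ((s : ℝ) : EReal) < a (-2) := by
    rw [← hA2]; exact EReal.coe_lt_coe_iff.mpr hsA2
  -- the test function φ₀
  have hbna : pb ≠ pa := by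
    intro h; rw [h, dist_self] at hab; norm_num at hab
  have hcna : pc ≠ pa := by
    intro h; rw [h, dist_self] at hac; norm_num at hac
  set φ₀ : X → ℝ := fun x => if x = pa then r else s with hφ₀def
  have hφa : φ₀ pa = r := if_pos rfl
  have hφb : φ₀ pb = s := if_neg hbna
  have hφc : φ₀ pc = s := if_neg hcna
  -- Step A : compute the multiplication ζ(M)
  have hmultM : mult (idemOf
      ![idemOf ![pa, pb] ![(-2 : EReal), 0], idemOf ![pb, pc] ![(-3 : EReal), 0]]
      ![(-1 : EReal), 0])
      = idemOf ![pa, pb, pb, pc] ![(-3 : EReal), -1, -3, 0] := by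
    funext φ
    show idemOf ![idemOf ![pa, pb] ![(-2 : EReal), 0], idemOf ![pb, pc] ![(-3 : EReal), 0]]
      ![(-1 : EReal), 0] (fun μ' => μ' φ) = _
    rw [e1, e2, e3]
    simp only [idem_pair, idem_quad]
    rw [← max_add_add_left]
    rw [show (-1 : ℝ) + (-2 + φ pa) = -3 + φ pa by ring]
    exact (sup_assoc _ _ _).symm
  -- auxiliary facts about the coefficient vectors
  have hle2m2 : ∀ i, (![(-2 : EReal), 0] : Fin 2 → EReal) i ≤ 0 := by
    intro i; fin_cases i
    · exact eneg2le
    · exact le_rfl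
  have hle2m3 : ∀ i, (![(-3 : EReal), 0] : Fin 2 → EReal) i ≤ 0 := by
    intro i; fin_cases i
    · exact eneg3le
    · exact le_rfl
  have hle2m1 : ∀ i, (![(-1 : EReal), 0] : Fin 2 → EReal) i ≤ 0 := by
    intro i; fin_cases i
    · exact eneg1le
    · exact le_rfl
  have hle4 : ∀ i, (![(-3 : EReal), -1, -3, 0] : Fin 4 → EReal) i ≤ 0 := by
    intro i; fin_cases i
    · exact eneg3le
    · exact eneg1le
    · exact eneg3le
    · exact le_rfl
  have hex2m2 : ∃ i, (![(-2 : EReal), 0] : Fin 2 → EReal) i = 0 := ⟨1, rfl⟩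
  have hex2m3 : ∃ i, (![(-3 : EReal), 0] : Fin 2 → EReal) i = 0 := ⟨1, rfl⟩
  have hex2m1 : ∃ i, (![(-1 : EReal), 0] : Fin 2 → EReal) i = 0 := ⟨1, rfl⟩
  have hex4 : ∃ i, (![(-3 : EReal), -1, -3, 0] : Fin 4 → EReal) i = 0 := ⟨3, rfl⟩
  -- value of the left-hand side at φ₀
  have hLHS : mmOf ![pa, pb, pb, pc]
      (fun i => a ((![(-3 : EReal), -1, -3, 0] : Fin 4 → EReal) i)) φ₀ < A2 := by
    unfold mmOf
    rw [esup4]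
    simp only [Matrix.cons_val_zero, Matrix.cons_val_one, Matrix.cons_val_two,
      Matrix.cons_val_three, Matrix.head_cons, Matrix.tail_cons, hφa, hφb, hφc, a0top]
    rw [min_eq_left hr3.le, min_eq_right (le_top : ((s : ℝ) : EReal) ≤ ⊤)]
    have hXle : ((a (-3) ⊔ min (a (-1)) (s : EReal)) ⊔ min (a (-3)) (s : EReal)) ⊔ (s : EReal)
        ≤ a (-3) ⊔ (s : EReal) := by
      refine sup_le (sup_le (sup_le le_sup_left ?_) ?_) le_sup_right
      · exact le_sup_of_le_right (min_le_right _ _)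
      · exact le_sup_of_le_left (min_le_left _ _)
    have hXlt : ((a (-3) ⊔ min (a (-1)) (s : EReal)) ⊔ min (a (-3)) (s : EReal)) ⊔ (s : EReal)
        < a (-2) := hXle.trans_lt (sup_lt_iff.mpr ⟨h32, hs2⟩)
    have hXnb : (⊥ : EReal) <
        ((a (-3) ⊔ min (a (-1)) (s : EReal)) ⊔ min (a (-3)) (s : EReal)) ⊔ (s : EReal) :=
      lt_of_lt_of_le (EReal.bot_lt_coe s) le_sup_right
    have hXnt : ((a (-3) ⊔ min (a (-1)) (s : EReal)) ⊔ min (a (-3)) (s : EReal)) ⊔ (s : EReal)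
        < ⊤ := lt_of_lt_of_le hXlt le_top
    exact EReal.coe_lt_coe_iff.mp
      (by rw [EReal.coe_toReal hXnt.ne hXnb.ne', hA2]; exact hXlt)
  -- values of the images under g1 at φ₀
  have hgμ : mmOf ![pa, pb] (fun i => a ((![(-2 : EReal), 0] : Fin 2 → EReal) i)) φ₀ = A2 := by
    unfold mmOf
    rw [esup2]
    simp only [Matrix.cons_val_zero, Matrix.cons_val_one, Matrix.head_cons, hφa, hφb, a0top]
    rw [min_eq_left hr2.le, min_eq_right (le_top : ((s : ℝ) : EReal) ≤ ⊤),
      sup_eq_left.mpr hs2.le, hA2def]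
  have hgν : mmOf ![pb, pc] (fun i => a ((![(-3 : EReal), 0] : Fin 2 → EReal) i)) φ₀ = s := by
    unfold mmOf
    rw [esup2]
    simp only [Matrix.cons_val_zero, Matrix.cons_val_one, Matrix.head_cons, hφb, hφc, a0top]
    rw [min_eq_right (le_top : ((s : ℝ) : EReal) ≤ ⊤),
      sup_eq_right.mpr (min_le_right _ _), EReal.toReal_coe]
  -- value of the right-hand side at φ₀
  have hRHS : mult (Jmap g1 (g2 (idemOf
      ![idemOf ![pa, pb] ![(-2 : EReal), 0], idemOf ![pb, pc] ![(-3 : EReal), 0]]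
      ![(-1 : EReal), 0]))) φ₀ = A2 := by
    unfold mult Jmap
    rw [hg2 1 _ _ hle2m1 hex2m1]
    unfold mmOf
    rw [esup2]
    simp only [Matrix.cons_val_zero, Matrix.cons_val_one, Matrix.head_cons,
      Function.comp_apply, a0top]
    rw [hg1 1 _ _ hle2m2 hex2m2, hg1 1 _ _ hle2m3 hex2m3, hgμ, hgν,
      min_eq_right (le_top : ((s : ℝ) : EReal) ≤ ⊤)]
    rw [min_eq_right (by rw [hA2]; exact h21.le), hA2, sup_eq_left.mpr hs2.le, hA2def]
  -- conclusion
  rw [hmultM, hg1 3 _ _ hle4 hex4]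
  intro h
  have H := congrFun h φ₀
  rw [hRHS] at H
  exact absurd H (ne_of_lt hLHS)



end
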